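/- arXiv:1406.0877 — 7 statements merged into one kernel-verified Lean document; each statement's English description precedes it below -/
import Mathlib

section
/- The point (S*, I_H*, A*) with S* = Λ/(μ R₂), I_H* = (R₂-1) μ N_H (α₁+d_A+μ)/(β₂(α₁+d_A+μ+η ρ₁)), A* = (R₂-1) ρ₁ μ N_H/(β₂(α₁+d_A+μ+η ρ₁)) is an equilibrium of the HIV/AIDS submodel: setting S = S*, I_H = I_H*, A = A* makes the right-hand sides Λ - λ_H S - μ S, λ_H S - (ρ₁+μ)I_H + α₁ A, and ρ₁ I_H - α₁ A - (μ+d_A)A all equal to zero, where λ_H = β₂(I_H + η A)/N_H and N_H = S + I_H + A. -/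
theorem TB_free_equilibrium
    (Λ μ β₂ η ρ₁ α₁ dA NH : ℝ)
    (hΛ : 0 < Λ) (hμ : 0 < μ) (hβ₂ : 0 < β₂) (hη : 1 ≤ η)
    (hρ₁ : 0 < ρ₁) (hα₁ : 0 < α₁) (hdA : 0 < dA) (hNH : 0 < NH)
    (R₂ : ℝ)
    (hR₂def : R₂ = (Λ / (NH * μ)) * β₂ * (μ + α₁ + dA + η * ρ₁) /
      (μ * α₁ + (μ + ρ₁) * (μ + dA)))
    (S IH A : ℝ)
    (hS : S = Λ / (μ * R₂))
    (hIH : IH = (R₂ - 1) * (μ * NH * (α₁ + dA + μ)) /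
      (β₂ * (α₁ + dA + μ + η * ρ₁)))
    (hA : A = (R₂ - 1) * (ρ₁ * μ * NH) /
      (β₂ * (α₁ + dA + μ + η * ρ₁)))
    (lamH : ℝ) (hlam : lamH = β₂ * (IH + η * A) / NH) :
    Λ - lamH * S - μ * S = 0 ∧
    lamH * S - (ρ₁ + μ) * IH + α₁ * A = 0 ∧
    ρ₁ * IH - α₁ * A - (μ + dA) * A = 0 := by
  have hD : (0:ℝ) < α₁ + dA + μ + η * ρ₁ := by nlinarith
  have hE : (0:ℝ) < μ * α₁ + (μ + ρ₁) * (μ + dA) := by positivity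
  have hR₂ : 0 < R₂ := by
    rw [hR₂def]
    have : (0:ℝ) < μ + α₁ + dA + η * ρ₁ := by nlinarith
    positivity
  subst hR₂def hS hIH hA hlam
  refine ⟨?_, ?_, ?_⟩ <;>
  · field_simp
    ring
end

section
/- With β* = (μ α + (μ + ρ)(μ + d))/(α + d + μ + η ρ) and μ, ρ, α, d > 0, η ≥ 1, the three eigenvalues of the matrix J = ![![-μ, -β*, -β* η], ![0, β* - ρ - μ, β* η + α], ![0, ρ, -α - d - μ]] are 0, -μ, and λ₃ = (β* - ρ - μ) + (-α - d - μ), and λ₃ < 0. -/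
theorem jacobian_eigenvalues_at_bifurcation
    (μ ρ α d η : ℝ)
    (hμ : 0 < μ) (hρ : 0 < ρ) (hα : 0 < α) (hd : 0 < d) (hη : 1 ≤ η)
    (βs : ℝ) (hβ : βs = (μ * α + (μ + ρ) * (μ + d)) / (α + d + μ + η * ρ))
    (lam₃ : ℝ) (hlam : lam₃ = (βs - ρ - μ) + (-α - d - μ))
    (J : Matrix (Fin 3) (Fin 3) ℝ)
    (hJ : J = ![![-μ, -βs, -βs * η],
                ![0, βs - ρ - μ, βs * η + α],
                ![0, ρ, -α - d - μ]]) :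
    (∀ x : ℝ, Matrix.det (J - x • (1 : Matrix (Fin 3) (Fin 3) ℝ))
        = -(x - 0) * (x - (-μ)) * (x - lam₃)) ∧ lam₃ < 0 := by
  have hD : 0 < α + d + μ + η * ρ := by nlinarith
  have hβ' : βs * (α + d + μ + η * ρ) = μ * α + (μ + ρ) * (μ + d) := by
    rw [hβ]; field_simp
  have hdet : (βs - ρ - μ) * (-α - d - μ) - ρ * (βs * η + α) = 0 := by
    have : ((βs - ρ - μ) * (-α - d - μ) - ρ * (βs * η + α)) =
        -(βs * (α + d + μ + η * ρ)) + (μ * α + (μ + ρ) * (μ + d)) := by ring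
    rw [this, hβ']; ring
  have hρη : ρ ≤ η * ρ := le_mul_of_one_le_left hρ.le hη
  constructor
  · intro x
    simp only [Matrix.det_fin_three, Matrix.sub_apply, Matrix.smul_apply]
    subst hJ hlam
    simp [Matrix.det_fin_three, Matrix.sub_apply, Matrix.smul_apply, Matrix.one_apply, Matrix.vecHead, Matrix.vecTail]
    linear_combination (-μ - x) * hdet
  · subst hlam
    have : βs < α + d + 2*μ + ρ := by nlinarith [hβ', hρη, mul_pos hρ hα]
    linarith
end

section
/- The vector w = (w₁, w₂, w₃) with w₁ = -((μ α₁ + (μ + ρ₁)(μ + d_A)) w₃)/(ρ₁ μ), w₂ = ((α₁ + d_A + μ) w₃)/ρ₁, w₃ > 0 is a right eigenvector associated with eigenvalue 0 of the matrix J = ![![-μ, -β*, -β* η], ![0, β* - ρ₁ - μ, β* η + α₁], ![0, ρ₁, -α₁ - d_A - μ]], where β* = (μ α₁ + (μ + ρ₁)(μ + d_A))/(α₁ + d_A + μ + η ρ₁) and all parameters μ, ρ₁, α₁, d_A are positive, η ≥ 1. That is, J.mulVec w = 0. -/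
theorem right_eigenvector_zero_eigenvalue
    (μ ρ₁ α₁ dA η : ℝ)
    (hμ : 0 < μ) (hρ₁ : 0 < ρ₁) (hα₁ : 0 < α₁) (hdA : 0 < dA) (hη : 1 ≤ η)
    (βs : ℝ) (hβs : βs = (μ * α₁ + (μ + ρ₁) * (μ + dA)) / (α₁ + dA + μ + η * ρ₁))
    (w₃ : ℝ) (hw₃ : 0 < w₃)
    (w : Fin 3 → ℝ)
    (hw : w = ![-((μ * α₁ + (μ + ρ₁) * (μ + dA)) * w₃) / (ρ₁ * μ),
                ((α₁ + dA + μ) * w₃) / ρ₁, w₃]) :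
    Matrix.mulVec ![![-μ, -βs, -βs * η],
                    ![0, βs - ρ₁ - μ, βs * η + α₁],
                    ![0, ρ₁, -α₁ - dA - μ]] w = 0 := by
  have hD : α₁ + dA + μ + η * ρ₁ > 0 := by nlinarith
  subst hβs hw
  funext i
  fin_cases i <;>
    simp [Matrix.mulVec, dotProduct, Fin.sum_univ_succ] <;>
    field_simp <;> ring
end

section
/- The vector v = (0, v₂, v₃) with v₂ = v₃ (α₁ + d_A + μ + η ρ₁)/(α₁ + η ρ₁ + μ η), v₃ > 0, is a left eigenvector associated with eigenvalue 0 of J = ![![-μ, -β*, -β* η], ![0, β* - ρ₁ - μ, β* η + α₁], ![0, ρ₁, -α₁ - d_A - μ]], where β* = (μ α₁ + (μ + ρ₁)(μ + d_A))/(α₁ + d_A + μ + η ρ₁) and μ, ρ₁, α₁, d_A > 0, η ≥ 1. That is, Jᵀ.mulVec v = 0 (equivalently v ⬝ J = 0). -/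
theorem left_eigenvector_zero_eigenvalue
    (μ ρ₁ α₁ dA η : ℝ)
    (hμ : 0 < μ) (hρ₁ : 0 < ρ₁) (hα₁ : 0 < α₁) (hdA : 0 < dA) (hη : 1 ≤ η)
    (βs : ℝ) (hβs : βs = (μ * α₁ + (μ + ρ₁) * (μ + dA)) / (α₁ + dA + μ + η * ρ₁))
    (v₃ : ℝ) (hv₃ : 0 < v₃)
    (v : Fin 3 → ℝ)
    (hv : v = ![0, v₃ * (α₁ + dA + μ + η * ρ₁) / (α₁ + η * ρ₁ + μ * η), v₃]) :
    Matrix.mulVec (Matrix.transpose ![![-μ, -βs, -βs * η],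
                    ![0, βs - ρ₁ - μ, βs * η + α₁],
                    ![0, ρ₁, -α₁ - dA - μ]]) v = 0 := by
  have hη0 : 0 < η := lt_of_lt_of_le one_pos hη
  have hD1 : α₁ + dA + μ + η * ρ₁ ≠ 0 := by positivity
  have hD2 : α₁ + η * ρ₁ + μ * η ≠ 0 := by positivity
  subst hβs hv
  funext i
  fin_cases i <;>
      simp only [Matrix.mulVec, Matrix.transpose, dotProduct, Fin.sum_univ_three, Fin.zero_eta, Fin.mk_one, Fin.reduceFinMk,
        Matrix.cons_val_zero, Matrix.cons_val_one, Matrix.head_cons, Matrix.head_fin_const,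
        Matrix.cons_val_two, Matrix.tail_cons, Matrix.transpose_apply, Pi.zero_apply,
        Matrix.of_apply] <;>
    field_simp <;> ring
end

section
/- Consider the 2×2 matrix M = ![![-(k₁ + τ₁ + μ), β], ![k₁, -(τ₂ + μ + d_T)]] with all of k₁, τ₁, τ₂, μ, d_T, β strictly positive, and define R₁ = (β/(d_T + μ + τ₂)) * (k₁/(k₁ + τ₁ + μ)). Then both eigenvalues of M have negative real part if and only if R₁ < 1. -/
open Polynomial

theorem TB_block_stable_iff_R1_lt_one
    (k₁ τ₁ τ₂ μ dT β : ℝ)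
    (hk₁ : 0 < k₁) (hτ₁ : 0 < τ₁) (hτ₂ : 0 < τ₂) (hμ : 0 < μ)
    (hdT : 0 < dT) (hβ : 0 < β)
    (R₁ : ℝ) (hR₁ : R₁ = (β / (dT + μ + τ₂)) * (k₁ / (k₁ + τ₁ + μ)))
    (M : Matrix (Fin 2) (Fin 2) ℝ)
    (hM : M = ![![-(k₁ + τ₁ + μ), β], ![k₁, -(τ₂ + μ + dT)]]) :
    (∀ z : ℂ,
      (Matrix.charpoly (M.map (fun x => (x : ℂ)))).IsRoot z → z.re < 0) ↔
    R₁ < 1 := by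
  subst hM hR₁
  set s : ℝ := (k₁ + τ₁ + μ) + (τ₂ + μ + dT) with hs_def
  set c : ℝ := (k₁ + τ₁ + μ) * (τ₂ + μ + dT) - β * k₁ with hc_def
  have hs : 0 < s := by positivity
  -- root condition rewrite
  have hroot : ∀ z : ℂ,
      (Matrix.charpoly (Matrix.map (![![-(k₁ + τ₁ + μ), β], ![k₁, -(τ₂ + μ + dT)]] :
        Matrix (Fin 2) (Fin 2) ℝ) (fun x => (x : ℂ)))).IsRoot z ↔
      z ^ 2 + (s : ℂ) * z + (c : ℂ) = 0 := by
    intro z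
    have hcp : (Matrix.map (![![-(k₁ + τ₁ + μ), β], ![k₁, -(τ₂ + μ + dT)]] :
        Matrix (Fin 2) (Fin 2) ℝ) (fun x => (x : ℂ))).charpoly
        = (X - C (-(k₁ + τ₁ + μ) : ℂ)) * (X - C (-(τ₂ + μ + dT) : ℂ))
          - C ((β : ℂ)) * C ((k₁ : ℂ)) := by
      rw [Matrix.charpoly, Matrix.det_fin_two]
      simp [Matrix.charmatrix_apply_eq, Matrix.charmatrix_apply_ne, Matrix.map_apply]
      simp [Matrix.map]
    rw [Polynomial.IsRoot, hcp]
    simp only [Polynomial.eval_add, Polynomial.eval_sub, Polynomial.eval_mul,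
      Polynomial.eval_X, Polynomial.eval_C]
    constructor <;> intro h
    · simp only [hs_def, hc_def]
      push_cast at h ⊢
      linear_combination h
    · simp only [hs_def, hc_def] at h
      push_cast at h ⊢
      linear_combination h
  have hR : ((β / (dT + μ + τ₂)) * (k₁ / (k₁ + τ₁ + μ)) < 1) ↔ 0 < c := by
    rw [div_mul_div_comm, div_lt_one (by positivity)]
    constructor <;> intro h <;> [skip; skip] <;> nlinarith
  rw [hR]
  constructor
  · intro h
    by_contra hc
    push_neg at hc
    set x : ℝ := (-s + Real.sqrt (s ^ 2 - 4 * c)) / 2 with hx_def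
    have hdisc : (0:ℝ) ≤ s ^ 2 - 4 * c := by nlinarith
    have hsq : Real.sqrt (s ^ 2 - 4 * c) ^ 2 = s ^ 2 - 4 * c := Real.sq_sqrt hdisc
    have hge : s ≤ Real.sqrt (s ^ 2 - 4 * c) := by
      have := Real.sqrt_le_sqrt (show s ^ 2 ≤ s ^ 2 - 4 * c by nlinarith)
      rwa [Real.sqrt_sq hs.le] at this
    have hx0 : 0 ≤ x := by rw [hx_def]; linarith
    have hxr : (x:ℂ) ^ 2 + (s:ℂ) * (x:ℂ) + (c:ℂ) = 0 := by
      have h0 : x ^ 2 + s * x + c = 0 := by rw [hx_def]; nlinarith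
      have h2 : ((x ^ 2 + s * x + c : ℝ) : ℂ) = 0 := by rw [h0]; norm_num
      push_cast at h2
      exact h2
    have := h x ((hroot x).mpr hxr)
    simp only [Complex.ofReal_re] at this
    linarith
  · intro hc z hz
    rw [hroot] at hz
    have hre : z.re ^ 2 - z.im ^ 2 + s * z.re + c = 0 := by
      have := congrArg Complex.re hz
      simpa [pow_two, Complex.mul_re, Complex.mul_im] using this
    have him : z.im * (2 * z.re + s) = 0 := by
      have := congrArg Complex.im hz
      simp [pow_two, Complex.mul_re, Complex.mul_im] at this
      linarith
    rcases mul_eq_zero.mp him with hy | hy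
    · by_contra hxx
      push_neg at hxx
      nlinarith
    · linarith
end

section
/- Consider the 2×2 matrix M = ![![β - ρ - μ, β η + α], ![ρ, -(α + d + μ)]] with α, d, μ, ρ, β > 0 and η ≥ 1, and define R₂ = β (μ + α + d + η ρ)/(μ α + (μ + ρ)(μ + d)). Then det M > 0 if and only if R₂ < 1, and if R₂ < 1 then both eigenvalues of M have negative real part. -/
open Polynomial

theorem HIV_block_stable
    (α d μ ρ β η : ℝ)
    (hα : 0 < α) (hd : 0 < d) (hμ : 0 < μ) (hρ : 0 < ρ) (hβ : 0 < β)
    (hη : 1 ≤ η)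
    (R₂ : ℝ)
    (hR₂ : R₂ = β * (μ + α + d + η * ρ) / (μ * α + (μ + ρ) * (μ + d)))
    (M : Matrix (Fin 2) (Fin 2) ℝ)
    (hM : M = ![![β - ρ - μ, β * η + α], ![ρ, -(α + d + μ)]]) :
    (0 < Matrix.det M ↔ R₂ < 1) ∧
    (R₂ < 1 → ∀ z : ℂ,
      (Matrix.charpoly (M.map (fun x => (x : ℂ)))).IsRoot z → z.re < 0) := by
  have hD : 0 < μ * α + (μ + ρ) * (μ + d) := by positivity
  have hdet : Matrix.det M
      = (μ * α + (μ + ρ) * (μ + d)) - β * (μ + α + d + η * ρ) := by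
    subst hM
    erw [Matrix.det_fin_two]
    simp [Matrix.cons_val_zero, Matrix.cons_val_one]
    ring
  have hiff : 0 < Matrix.det M ↔ R₂ < 1 := by
    rw [hdet, hR₂, div_lt_one hD]
    constructor <;> intro h <;> linarith
  refine ⟨hiff, fun hR z hz => ?_⟩
  have hdetpos : 0 < Matrix.det M := hiff.mpr hR
  have hβlt : β * (μ + α + d + η * ρ) < μ * α + (μ + ρ) * (μ + d) := by
    rw [hR₂, div_lt_one hD] at hR; exact hR
  have htr : (β - ρ - μ) + (-(α + d + μ)) < 0 := by
    nlinarith [mul_pos hβ hρ, mul_pos hμ hρ]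
  set t : ℝ := (β - ρ - μ) + (-(α + d + μ)) with ht
  set δ : ℝ := Matrix.det M with hδ
  -- derive quadratic equation for z
  have hz0 : (z - ((β:ℂ) - ρ - μ)) * (z - (-(μ:ℂ) + (-(d:ℂ) + -(α:ℂ))))
      + (-(α:ℂ) + -((β:ℂ) * η)) * ρ = 0 := by
    have h := hz
    rw [hM] at h
    rw [Matrix.charpoly, Matrix.det_fin_two,
      Matrix.charmatrix_apply_eq, Matrix.charmatrix_apply_eq,
      Matrix.charmatrix_apply_ne _ _ _ (by decide),
      Matrix.charmatrix_apply_ne _ _ _ (by decide)] at h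
    simpa [Polynomial.IsRoot, Matrix.map_apply, Matrix.map, Matrix.of_apply] using h
  have hz' : z * z - (t : ℂ) * z + (δ : ℂ) = 0 := by
    rw [ht, hdet]
    push_cast
    linear_combination hz0
  set x := z.re with hx
  set y := z.im with hy
  have hre : x * x - y * y - t * x + δ = 0 := by
    have h := congrArg Complex.re hz'
    simpa [Complex.add_re, Complex.sub_re, Complex.mul_re, Complex.ofReal_re,
      Complex.ofReal_im] using h
  have him : x * y + y * x - t * y = 0 := by
    have h := congrArg Complex.im hz'
    simpa [Complex.add_im, Complex.sub_im, Complex.mul_im, Complex.ofReal_re,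
      Complex.ofReal_im] using h
  by_contra hxpos
  push_neg at hxpos
  have hy0 : y * (2 * x - t) = 0 := by nlinarith
  rcases mul_eq_zero.mp hy0 with h | h
  · rw [h] at hre
    nlinarith [mul_nonneg (neg_nonneg.mpr (le_of_lt htr)) hxpos,
      hdetpos, hdet]
  · nlinarith
end

section
/- Let all parameters be strictly positive, η ≥ 1, δ ≥ 1, and let (S, L_T, I_T, R_T, I_H, A, L_TH, I_TH, R_TH, A_T) be a point of the nonnegative orthant of ℝ¹⁰ with I_T > 0 and λ_H = β₂(I_H + I_TH + L_TH + R_TH + η(A + A_T))/N > 0. Then the vector Ĝ(X, Z) from the paper, whose second component is -δ λ_H I_T, has a strictly negative component; in particular the componentwise inequality Ĝ(X, Z) ≥ 0 fails. -/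
theorem H2_fails
    (Λ μ β₁ β₂ η δ ψ βp₁ βp₂ N : ℝ)
    (hΛ : 0 < Λ) (hμ : 0 < μ) (hβ₁ : 0 < β₁) (hβ₂ : 0 < β₂)
    (hη : 1 ≤ η) (hδ : 1 ≤ δ) (hψ : 1 ≤ ψ)
    (hβp₁ : 0 < βp₁) (hβp₂ : 0 < βp₂) (hN : 0 < N)
    (S LT IT RT IH A LTH ITH RTH AT : ℝ)
    (hnn : 0 ≤ S ∧ 0 ≤ LT ∧ 0 ≤ IT ∧ 0 ≤ RT ∧ 0 ≤ IH ∧ 0 ≤ A ∧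
      0 ≤ LTH ∧ 0 ≤ ITH ∧ 0 ≤ RTH ∧ 0 ≤ AT)
    (hIT : 0 < IT)
    (lamT lamH : ℝ)
    (hlamT : lamT = β₁ / N * (IT + ITH + AT))
    (hlamH : lamH = β₂ / N * (IH + ITH + LTH + RTH + η * (A + AT)))
    (hlamHpos : 0 < lamH)
    (G : Fin 8 → ℝ)
    (hG : G = ![lamT * (Λ / μ - S - βp₁ * RT),
                -(δ * lamH * IT),
                lamH * (Λ / μ - S - RT - ψ * IH),
                0,
                -(βp₂ * lamT * RTH),
                -(δ * lamH * IT + ψ * lamT * IH),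
                βp₂ * lamT * RTH,
                0]) :
    (∃ i : Fin 8, G i < 0) ∧ ¬ (∀ i : Fin 8, 0 ≤ G i) := by
  have h1 : G 1 < 0 := by
    simp only [hG]
    show -(δ * lamH * IT) < 0
    have : 0 < δ * lamH * IT := by positivity
    linarith
  exact ⟨⟨1, h1⟩, fun h => absurd (h 1) (not_le.mpr h1)⟩
end
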